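/- arXiv:1306.1360 — 2 statements merged into one kernel-verified Lean document; each statement's English description precedes it below -/
import Mathlib

section
/- Let C ⊆ {0,1}^n be a linear code with dual distance Γ and |C| ≤ 2^{n/64}, and let C' ⊆ C. If C is C'-partially testable with q adaptive queries (for some ε < 1/8), then |C'| ≤ |C|·2^{−⌊Γ/(32q)⌋}. -/
open Finset
open scoped Classical

/-- The reading of input `x ∈ {0,1}^n` according to a `q`-reader `r`:
`y_{i+1} = x_{r_i(y_1,…,y_i)}`. -/
def readQ {n q : ℕ} (r : (i : Fin q) → (Fin (i : ℕ) → ZMod 2) → Fin n)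
    (x : Fin n → ZMod 2) (i : Fin q) : ZMod 2 :=
  x (r i (fun k => readQ r x ⟨k.1, k.2.trans i.2⟩))
termination_by i.1
decreasing_by exact k.2

section Aux

lemma readQ_eq_iff {n q : ℕ} (r : (i : Fin q) → (Fin (i : ℕ) → ZMod 2) → Fin n)
    (x : Fin n → ZMod 2) (w : Fin q → ZMod 2) :
    readQ r x = w ↔ ∀ i : Fin q, x (r i (fun k => w ⟨k.1, k.2.trans i.2⟩)) = w i := by
  constructor
  · intro h i
    conv_rhs => rw [← h]
    rw [readQ]
    congr 2
    funext k
    rw [h]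
  · intro H
    funext i
    have key : ∀ m : ℕ, ∀ hm : m < q, readQ r x ⟨m, hm⟩ = w ⟨m, hm⟩ := by
      intro m
      induction m using Nat.strong_induction_on with
      | _ m IH =>
        intro hm
        rw [readQ]
        have : (fun k : Fin m => readQ r x ⟨k.1, k.2.trans hm⟩)
            = fun k : Fin m => w ⟨k.1, k.2.trans hm⟩ := by
          funext k; exact IH k.1 k.2 _
        rw [this]
        exact H ⟨m, hm⟩
    exact key i.1 i.2

lemma filter_inst_irrel {V : Type} (pr : V → Prop) (h1 h2 : DecidablePred pr)
    (s : Finset V) : @Finset.filter V pr h1 s = @Finset.filter V pr h2 s := by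
  rw [Subsingleton.elim h1 h2]

/-- instance-free counting -/
noncomputable def cnt {V : Type} [Fintype V] (pr : V → Prop) : ℕ :=
  Nat.card {x : V // pr x}

lemma cnt_eq {V : Type} [Fintype V] (pr : V → Prop) (h : DecidablePred pr) :
    (@Finset.filter V pr h Finset.univ).card = cnt pr := by
  haveI := h
  unfold cnt
  rw [Nat.card_eq_fintype_card]
  rw [Fintype.card_subtype]
  congr 1
  exact filter_inst_irrel _ _ _ _

lemma cnt_congr {V : Type} [Fintype V] {pr pr' : V → Prop} (h : ∀ x, pr x ↔ pr' x) :
    cnt pr = cnt pr' := by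
  unfold cnt
  exact Nat.card_congr (Equiv.subtypeEquivRight h)

lemma cnt_false {V : Type} [Fintype V] (pr : V → Prop) (h : ∀ x, ¬ pr x) : cnt pr = 0 := by
  unfold cnt
  haveI : IsEmpty {x : V // pr x} := ⟨fun x => h x.1 x.2⟩
  exact Nat.card_of_isEmpty

lemma cnt_mono {V : Type} [Fintype V] {pr pr' : V → Prop} (h : ∀ x, pr x → pr' x) :
    cnt pr ≤ cnt pr' := by
  rw [← cnt_eq pr (fun a => Classical.propDecidable _),
    ← cnt_eq pr' (fun a => Classical.propDecidable _)]
  exact Finset.card_le_card (Finset.monotone_filter_right _ fun x _ => h x)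

lemma count_fiber {n Γ : ℕ} (C : Submodule (ZMod 2) (Fin n → ZMod 2))
    (hdual : ∀ y : Fin n → ZMod 2, y ≠ 0 → (∀ c ∈ C, ∑ i, y i * c i = 0) →
      Γ ≤ (Finset.univ.filter fun i => y i ≠ 0).card)
    (S : Finset (Fin n)) (hS : S.card < Γ) (σ : Fin n → ZMod 2) :
    (Finset.univ.filter fun x : Fin n → ZMod 2 => x ∈ C ∧ ∀ p ∈ S, x p = σ p).card * 2 ^ S.card
      = Nat.card C := by
  classical
  let L : (Fin n → ZMod 2) →ₗ[ZMod 2] (S → ZMod 2) := LinearMap.pi fun p => LinearMap.proj (p : Fin n)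
  have hLapp : ∀ (x : Fin n → ZMod 2) (p : S), L x p = x p := fun x p => rfl
  have hadd2 : ∀ a : ZMod 2, a + a = 0 := by decide
  have haab : ∀ a b : ZMod 2, a + a + b = b := by decide
  have habc : ∀ a b c : ZMod 2, a + b + c + c + b = a := by decide
  have hsurj : ∀ v : S → ZMod 2, ∃ c, c ∈ C ∧ ∀ p : S, c p = v p := by
    intro v
    have hv : v ∈ Submodule.map L C := by
      by_contra hv
      obtain ⟨f, hf0, hfbot⟩ := Submodule.exists_dual_map_eq_bot_of_notMem hv inferInstance
      set y : Fin n → ZMod 2 := fun i =>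
        if h : i ∈ S then f (fun p : S => if (⟨i, h⟩ : S) = p then 1 else 0) else 0
        with hy
      have hyS : ∀ p : S, y p = f (fun p' : S => if p = p' then 1 else 0) := by
        rintro ⟨i, hi⟩
        simp only [hy, dif_pos hi]
      have hfy : ∀ u : S → ZMod 2, f u = ∑ p : S, u p * y p := by
        intro u
        rw [LinearMap.pi_apply_eq_sum_univ f u]
        refine Finset.sum_congr rfl fun p _ => ?_
        rw [hyS p, smul_eq_mul]
      have horth : ∀ c ∈ C, ∑ i, y i * c i = 0 := by
        intro c hc
        have hLc : f (L c) = 0 := by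
          have : f (L c) ∈ Submodule.map f (Submodule.map L C) :=
            Submodule.mem_map_of_mem (Submodule.mem_map_of_mem hc)
          rw [hfbot] at this
          exact (Submodule.mem_bot (R := ZMod 2)).1 this
        have hsum1 : ∑ p : S, y p * c p = ∑ i ∈ S, y i * c i :=
          Finset.sum_coe_sort S (fun i => y i * c i)
        have hsum2 : ∑ i ∈ S, y i * c i = ∑ i, y i * c i := by
          refine Finset.sum_subset (Finset.subset_univ S) ?_
          intro i _ hiS
          simp [hy, dif_neg hiS]
        rw [← hsum2, ← hsum1]
        rw [hfy (L c)] at hLc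
        rw [← hLc]
        exact Finset.sum_congr rfl fun p _ => by rw [hLapp, mul_comm]
      have hyne : y ≠ 0 := by
        intro h0
        apply hf0
        rw [hfy v]
        simp [h0]
      have hΓ := hdual y hyne horth
      have hsub : (Finset.univ.filter fun i => y i ≠ 0) ⊆ S := by
        intro i hi
        simp only [Finset.mem_filter] at hi
        by_contra hiS
        exact hi.2 (by simp [hy, dif_neg hiS])
      have := hΓ.trans (Finset.card_le_card hsub)
      omega
    obtain ⟨c, hc, hcv⟩ := hv
    exact ⟨c, hc, fun p => by rw [← hLapp c p, hcv]⟩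
  set Cfin : Finset (Fin n → ZMod 2) := Finset.univ.filter (· ∈ C) with hCfin
  set restr : (Fin n → ZMod 2) → (S → ZMod 2) := fun x p => x p with hrestr
  have h1 : Cfin.card = ∑ v : S → ZMod 2,
      (Cfin.filter fun x => restr x = v).card :=
    Finset.card_eq_sum_card_fiberwise (fun x _ => Finset.mem_univ _)
  have h2 : ∀ v w : S → ZMod 2,
      (Cfin.filter fun x => restr x = v).card = (Cfin.filter fun x => restr x = w).card := by
    intro v w
    obtain ⟨cv, hcvC, hcv⟩ := hsurj v
    obtain ⟨cw, hcwC, hcw⟩ := hsurj w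
    refine Finset.card_bij' (fun x _ => x + cv + cw) (fun x _ => x + cw + cv) ?_ ?_ ?_ ?_
    · intro x hx
      simp only [Finset.mem_filter, hCfin] at hx ⊢
      obtain ⟨⟨-, hxC⟩, hxv⟩ := hx
      refine ⟨⟨Finset.mem_univ _, C.add_mem (C.add_mem hxC hcvC) hcwC⟩, ?_⟩
      funext p
      have hxp : x ↑p = v p := congrFun hxv p
      show x ↑p + cv ↑p + cw ↑p = w p
      rw [hxp, hcv p, hcw p]
      exact haab _ _
    · intro x hx
      simp only [Finset.mem_filter, hCfin] at hx ⊢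
      obtain ⟨⟨-, hxC⟩, hxw⟩ := hx
      refine ⟨⟨Finset.mem_univ _, C.add_mem (C.add_mem hxC hcwC) hcvC⟩, ?_⟩
      funext p
      have hxp : x ↑p = w p := congrFun hxw p
      show x ↑p + cw ↑p + cv ↑p = v p
      rw [hxp, hcw p, hcv p]
      exact haab _ _
    · intro x _
      funext i
      show x i + cv i + cw i + cw i + cv i = x i
      exact habc _ _ _
    · intro x _
      funext i
      show x i + cw i + cv i + cv i + cw i = x i
      exact habc _ _ _
  have hconst : Cfin.card = 2 ^ S.card * (Cfin.filter fun x => restr x = restr σ).card := by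
    rw [h1]
    rw [Finset.sum_congr rfl fun v _ => h2 v (restr σ)]
    rw [Finset.sum_const, smul_eq_mul]
    congr 1
    rw [Finset.card_univ, Fintype.card_fun, Fintype.card_coe]
    norm_num
  have hfilter_eq : (Finset.univ.filter fun x : Fin n → ZMod 2 => x ∈ C ∧ ∀ p ∈ S, x p = σ p)
      = Cfin.filter fun x => restr x = restr σ := by
    rw [hCfin, Finset.filter_filter]
    refine Finset.filter_congr fun x _ => ?_
    constructor
    · rintro ⟨hxC, hx⟩
      exact ⟨hxC, funext fun p => hx p p.2⟩
    · rintro ⟨hxC, hx⟩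
      exact ⟨hxC, fun p hp => congrFun hx ⟨p, hp⟩⟩
  have hcard : Nat.card C = Cfin.card := by
    rw [Nat.card_eq_fintype_card, hCfin]
    simp [Fintype.card_subtype]
  rw [hfilter_eq, hcard, hconst, mul_comm]

lemma hdual_top {n Γ : ℕ} : ∀ y : Fin n → ZMod 2, y ≠ 0 →
    (∀ c ∈ (⊤ : Submodule (ZMod 2) (Fin n → ZMod 2)), ∑ i, y i * c i = 0) →
    Γ ≤ (Finset.univ.filter fun i => y i ≠ 0).card := by
  intro y hy h
  exfalso
  apply hy
  funext i
  by_contra hi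
  have := h (Pi.single i 1) Submodule.mem_top
  rw [Finset.sum_eq_single_of_mem i (Finset.mem_univ i)
    (fun j _ hj => by rw [Pi.single_eq_of_ne hj, mul_zero])] at this
  rw [Pi.single_eq_same, mul_one] at this
  exact hi this

lemma card_top {n : ℕ} : Nat.card (⊤ : Submodule (ZMod 2) (Fin n → ZMod 2)) = 2 ^ n := by
  rw [Nat.card_eq_fintype_card, Fintype.card_congr Submodule.topEquiv.toEquiv,
    Fintype.card_fun]
  simp [Fintype.card_fin]

lemma constraint_count {n Γ : ℕ} (C : Submodule (ZMod 2) (Fin n → ZMod 2))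
    (hdual : ∀ y : Fin n → ZMod 2, y ≠ 0 → (∀ c ∈ C, ∑ i, y i * c i = 0) →
      Γ ≤ (Finset.univ.filter fun i => y i ≠ 0).card)
    {J : Type} [Fintype J] (hJ : Fintype.card J < Γ)
    (P : J → Fin n) (b : J → ZMod 2) :
    2 ^ n * (Finset.univ.filter fun x : Fin n → ZMod 2 => x ∈ C ∧ ∀ j, x (P j) = b j).card
      = Nat.card C * (Finset.univ.filter fun x : Fin n → ZMod 2 => ∀ j, x (P j) = b j).card := by
  classical
  by_cases hcons : ∀ j j', P j = P j' → b j = b j'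
  · set S : Finset (Fin n) := Finset.image P Finset.univ with hSdef
    have hScard : S.card < Γ :=
      lt_of_le_of_lt ((Finset.card_image_le).trans (le_of_eq (Finset.card_univ))) hJ
    set σ : Fin n → ZMod 2 := fun p => if h : ∃ j, P j = p then b h.choose else 0 with hσ
    have hbs : ∀ j, σ (P j) = b j := by
      intro j
      have hex : ∃ j', P j' = P j := ⟨j, rfl⟩
      rw [hσ]
      simp only [dif_pos hex]
      exact hcons _ _ hex.choose_spec
    have hiff : ∀ x : Fin n → ZMod 2, (∀ j, x (P j) = b j) ↔ (∀ p ∈ S, x p = σ p) := by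
      intro x
      constructor
      · intro hx p hp
        obtain ⟨j, -, rfl⟩ := Finset.mem_image.1 hp
        rw [hx j, hbs j]
      · intro hx j
        rw [hx (P j) (Finset.mem_image_of_mem P (Finset.mem_univ j)), hbs j]
    have hC := count_fiber (Γ := Γ) C hdual S hScard σ
    have hT := count_fiber (Γ := Γ) ⊤ hdual_top S hScard σ
    rw [card_top] at hT
    have e1 : (Finset.univ.filter fun x : Fin n → ZMod 2 => x ∈ C ∧ ∀ j, x (P j) = b j)
        = Finset.univ.filter fun x => x ∈ C ∧ ∀ p ∈ S, x p = σ p :=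
      Finset.filter_congr fun x _ => by rw [hiff x]
    have e2 : (Finset.univ.filter fun x : Fin n → ZMod 2 => ∀ j, x (P j) = b j)
        = Finset.univ.filter fun x => x ∈ (⊤ : Submodule (ZMod 2) (Fin n → ZMod 2))
            ∧ ∀ p ∈ S, x p = σ p :=
      Finset.filter_congr fun x _ => by simp [hiff x]
    rw [e1, e2, ← hT, ← hC]
    ring
  · push_neg at hcons
    obtain ⟨j, j', heq, hne⟩ := hcons
    have h1 : (Finset.univ.filter fun x : Fin n → ZMod 2 => x ∈ C ∧ ∀ j, x (P j) = b j) = ∅ := by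
      refine Finset.filter_eq_empty_iff.2 fun x _ => ?_
      rintro ⟨-, hx⟩
      exact hne ((hx j).symm.trans (heq ▸ hx j'))
    have h2 : (Finset.univ.filter fun x : Fin n → ZMod 2 => ∀ j, x (P j) = b j) = ∅ := by
      refine Finset.filter_eq_empty_iff.2 fun x _ => ?_
      intro hx
      exact hne ((hx j).symm.trans (heq ▸ hx j'))
    rw [h1, h2]
    simp

lemma compound_count {n Γ q K : ℕ} (C : Submodule (ZMod 2) (Fin n → ZMod 2))
    (hdual : ∀ y : Fin n → ZMod 2, y ≠ 0 → (∀ c ∈ C, ∑ i, y i * c i = 0) →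
      Γ ≤ (Finset.univ.filter fun i => y i ≠ 0).card)
    (hKq : K * q < Γ)
    (rr : Fin K → (i : Fin q) → (Fin (i : ℕ) → ZMod 2) → Fin n)
    (pp : Fin K → (Fin q → ZMod 2) → Bool) :
    2 ^ n * cnt (fun x : Fin n → ZMod 2 => x ∈ C ∧ ∀ j, pp j (readQ (rr j) x) = true)
      = Nat.card C * cnt (fun x : Fin n → ZMod 2 => ∀ j, pp j (readQ (rr j) x) = true) := by
  classical
  set Tmap : (Fin n → ZMod 2) → (Fin K → Fin q → ZMod 2) :=
    fun x j => readQ (rr j) x with hTmap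
  have split : ∀ pr : (Fin n → ZMod 2) → Prop,
      cnt pr = ∑ W : Fin K → Fin q → ZMod 2, cnt (fun x => pr x ∧ Tmap x = W) := by
    intro pr
    rw [← cnt_eq pr (fun a => Classical.propDecidable _)]
    rw [Finset.card_eq_sum_card_fiberwise
      (f := Tmap) (t := Finset.univ) (fun x _ => Finset.mem_univ _)]
    refine Finset.sum_congr rfl fun W _ => ?_
    rw [Finset.filter_filter]
    exact cnt_eq _ _
  have perW : ∀ W : Fin K → Fin q → ZMod 2,
      2 ^ n * cnt (fun x : Fin n → ZMod 2 =>
          (x ∈ C ∧ ∀ j, pp j (readQ (rr j) x) = true) ∧ Tmap x = W)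
        = Nat.card C * cnt (fun x : Fin n → ZMod 2 =>
            (∀ j, pp j (readQ (rr j) x) = true) ∧ Tmap x = W) := by
    intro W
    set P : Fin K × Fin q → Fin n :=
      fun jl => rr jl.1 jl.2 (fun m => W jl.1 ⟨m.1, m.2.trans jl.2.2⟩) with hP
    set b : Fin K × Fin q → ZMod 2 := fun jl => W jl.1 jl.2 with hb
    have hTW : ∀ x, Tmap x = W ↔ ∀ jl : Fin K × Fin q, x (P jl) = b jl := by
      intro x
      rw [funext_iff]
      constructor
      · intro h jl
        exact (readQ_eq_iff (rr jl.1) x (W jl.1)).1 (h jl.1) jl.2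
      · intro h j
        exact (readQ_eq_iff (rr j) x (W j)).2 fun i => h (j, i)
    by_cases hW : ∀ j, pp j (W j) = true
    · have e1 : ∀ x : Fin n → ZMod 2,
          ((x ∈ C ∧ ∀ j, pp j (readQ (rr j) x) = true) ∧ Tmap x = W)
          ↔ (x ∈ C ∧ ∀ jl, x (P jl) = b jl) := by
        intro x
        constructor
        · rintro ⟨⟨hxC, -⟩, hT⟩
          exact ⟨hxC, (hTW x).1 hT⟩
        · rintro ⟨hxC, h⟩
          have hT : Tmap x = W := (hTW x).2 h
          refine ⟨⟨hxC, fun j => ?_⟩, hT⟩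
          rw [show readQ (rr j) x = W j from congrFun hT j]
          exact hW j
      have e2 : ∀ x : Fin n → ZMod 2, ((∀ j, pp j (readQ (rr j) x) = true) ∧ Tmap x = W)
          ↔ (∀ jl, x (P jl) = b jl) := by
        intro x
        constructor
        · rintro ⟨-, hT⟩
          exact (hTW x).1 hT
        · intro h
          have hT : Tmap x = W := (hTW x).2 h
          refine ⟨fun j => ?_, hT⟩
          rw [show readQ (rr j) x = W j from congrFun hT j]
          exact hW j
      rw [cnt_congr e1, cnt_congr e2]
      have := constraint_count (Γ := Γ) C hdual
        (J := Fin K × Fin q) (by simpa using hKq) P b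
      rwa [cnt_eq _ _, cnt_eq _ _] at this
    · have e0 : ∀ x : Fin n → ZMod 2,
          ¬ ((∀ j, pp j (readQ (rr j) x) = true) ∧ Tmap x = W) := by
        rintro x ⟨haccx, hT⟩
        apply hW
        intro j
        rw [← show readQ (rr j) x = W j from congrFun hT j]
        exact haccx j
      have z1 : cnt (fun x : Fin n → ZMod 2 =>
          (x ∈ C ∧ ∀ j, pp j (readQ (rr j) x) = true) ∧ Tmap x = W) = 0 :=
        cnt_false _ fun x h => e0 x ⟨h.1.2, h.2⟩
      have z2 : cnt (fun x : Fin n → ZMod 2 =>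
          (∀ j, pp j (readQ (rr j) x) = true) ∧ Tmap x = W) = 0 :=
        cnt_false _ fun x h => e0 x h
      rw [z1, z2]
      simp
  rw [split, split, Finset.mul_sum, Finset.mul_sum]
  exact Finset.sum_congr rfl fun W _ => perW W

lemma ball_cnt {n m : ℕ} (c : Fin n → ZMod 2) :
    cnt (fun z : Fin n → ZMod 2 => hammingDist z c ≤ m)
      ≤ ∑ j ∈ Finset.range (m + 1), n.choose j := by
  classical
  have h1 : cnt (fun z : Fin n → ZMod 2 => hammingDist z c ≤ m)
      = cnt (fun e : Fin n → ZMod 2 => hammingNorm e ≤ m) := by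
    unfold cnt
    refine Nat.card_congr ((Equiv.subRight c).subtypeEquiv fun z => ?_)
    rw [hammingDist_eq_hammingNorm]
    rw [Equiv.subRight_apply, sub_eq_neg_add, ← hammingDist_eq_hammingNorm,
      ← hammingDist_eq_hammingNorm, hammingDist_comm]
  rw [h1, ← cnt_eq _ (fun a => Classical.propDecidable _)]
  rw [Finset.card_eq_sum_card_fiberwise
    (f := hammingNorm) (t := Finset.range (m+1))
    (fun x hx => by
      simp only [Finset.mem_coe, Finset.mem_filter] at hx
      exact Finset.mem_range.2 (Nat.lt_succ_of_le hx.2))]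
  refine Finset.sum_le_sum fun j _ => ?_
  refine le_trans (Finset.card_le_card
    (t := Finset.univ.filter (fun x : Fin n → ZMod 2 => hammingNorm x = j))
    (fun x hx => ?_)) ?_
  case _ =>
    simp only [Finset.mem_filter] at hx ⊢
    exact ⟨Finset.mem_univ _, hx.2⟩
  calc (Finset.univ.filter (fun x : Fin n → ZMod 2 => hammingNorm x = j)).card
      ≤ (Finset.powersetCard j (Finset.univ : Finset (Fin n))).card := ?_
    _ = n.choose j := by rw [Finset.card_powersetCard, Finset.card_univ, Fintype.card_fin]
  refine Finset.card_le_card_of_injOn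
    (fun e => Finset.univ.filter (fun i => e i ≠ 0)) ?_ ?_
  · intro e he
    simp only [Finset.mem_coe, Finset.mem_filter] at he ⊢
    rw [Finset.mem_powersetCard]
    refine ⟨Finset.subset_univ _, ?_⟩
    rw [← he.2]
    rfl
  · intro e1 h1' e2 h2' heq
    have heq2 : Finset.univ.filter (fun i => e1 i ≠ 0)
        = Finset.univ.filter (fun i => e2 i ≠ 0) := heq
    funext i
    have hzo : ∀ a b : ZMod 2, ((a ≠ 0) ↔ (b ≠ 0)) → a = b := by decide
    apply hzo
    constructor
    · intro h
      have hm : i ∈ Finset.univ.filter (fun i => e1 i ≠ 0) :=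
        Finset.mem_filter.2 ⟨Finset.mem_univ _, h⟩
      rw [heq2] at hm
      exact (Finset.mem_filter.1 hm).2
    · intro h
      have hm : i ∈ Finset.univ.filter (fun i => e2 i ≠ 0) :=
        Finset.mem_filter.2 ⟨Finset.mem_univ _, h⟩
      rw [← heq2] at hm
      exact (Finset.mem_filter.1 hm).2

lemma near_count {n m : ℕ} (C : Submodule (ZMod 2) (Fin n → ZMod 2)) :
    cnt (fun z : Fin n → ZMod 2 => ∃ c, c ∈ C ∧ hammingDist z c ≤ m)
      ≤ Nat.card C * ∑ j ∈ Finset.range (m + 1), n.choose j := by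
  classical
  rw [← cnt_eq _ (fun a => Classical.propDecidable _)]
  set Cfin : Finset (Fin n → ZMod 2) := Finset.univ.filter (· ∈ C) with hCfin
  have hsub : (@Finset.filter _ (fun z : Fin n → ZMod 2 => ∃ c, c ∈ C ∧ hammingDist z c ≤ m)
      (fun a => Classical.propDecidable _) Finset.univ)
      ⊆ Cfin.biUnion (fun c => @Finset.filter _ (fun z => hammingDist z c ≤ m)
          (fun a => Classical.propDecidable _) Finset.univ) := by
    intro z hz
    simp only [Finset.mem_filter] at hz
    obtain ⟨-, c, hcC, hd⟩ := hz
    refine Finset.mem_biUnion.2 ⟨c, ?_, ?_⟩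
    · simp only [hCfin, Finset.mem_filter]
      exact ⟨Finset.mem_univ _, hcC⟩
    · simp only [Finset.mem_filter]
      exact ⟨Finset.mem_univ _, hd⟩
  refine le_trans (Finset.card_le_card hsub) ?_
  refine le_trans (Finset.card_biUnion_le) ?_
  have hper : ∀ c ∈ Cfin, (@Finset.filter _ (fun z : Fin n → ZMod 2 => hammingDist z c ≤ m)
      (fun a => Classical.propDecidable _) Finset.univ).card
      ≤ ∑ j ∈ Finset.range (m + 1), n.choose j := by
    intro c _
    rw [cnt_eq _ _]
    exact ball_cnt c
  refine le_trans (Finset.sum_le_sum hper) ?_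
  rw [Finset.sum_const, smul_eq_mul]
  apply Nat.mul_le_mul_right
  rw [hCfin, Nat.card_eq_fintype_card, Fintype.card_subtype]

lemma B_bound {n m : ℕ} (hm : m ≤ n) :
    ((∑ j ∈ Finset.range (m + 1), n.choose j : ℕ) : ℝ) ≤ 4 ^ m * (5 / 4) ^ n := by
  push_cast
  calc ∑ j ∈ Finset.range (m + 1), (n.choose j : ℝ)
      ≤ ∑ j ∈ Finset.range (m + 1), (n.choose j : ℝ) * (4 ^ m * (1 / 4) ^ j) := by
        refine Finset.sum_le_sum fun j hj => ?_
        have hjm : j ≤ m := Nat.lt_succ_iff.1 (Finset.mem_range.1 hj)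
        have h4 : (4 : ℝ) ^ j ≤ 4 ^ m := pow_le_pow_right₀ (by norm_num) hjm
        have hge : (1 : ℝ) ≤ 4 ^ m * (1 / 4) ^ j := by
          rw [one_div, inv_pow, ← div_eq_mul_inv, le_div_iff₀ (by positivity)]
          simpa using h4
        exact le_mul_of_one_le_right (Nat.cast_nonneg _) hge
    _ = 4 ^ m * ∑ j ∈ Finset.range (m + 1), (n.choose j : ℝ) * (1 / 4) ^ j := by
        rw [Finset.mul_sum]
        exact Finset.sum_congr rfl fun j _ => by ring
    _ ≤ 4 ^ m * ∑ j ∈ Finset.range (n + 1), (n.choose j : ℝ) * (1 / 4) ^ j := by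
        refine mul_le_mul_of_nonneg_left ?_ (by positivity)
        refine Finset.sum_le_sum_of_subset_of_nonneg
          (Finset.range_subset_range.2 (by omega)) fun j _ _ => by positivity
    _ = 4 ^ m * (5 / 4) ^ n := by
        rw [show ((5:ℝ)/4) = (1/4 + 1) by norm_num, add_pow]
        congr 1
        exact Finset.sum_congr rfl fun j _ => by rw [one_pow]; ring
  
lemma numeric_bound {n k m : ℕ} (N B : ℝ) (hN0 : 0 ≤ N) (hB0 : 0 ≤ B)
    (hN : N ≤ 2 ^ ((n : ℝ) / 64)) (hk : (k : ℝ) ≤ (n : ℝ) / 32)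
    (hm : (m : ℝ) ≤ (n : ℝ) / 8) (hB : B ≤ 4 ^ m * (5 / 4) ^ n)
    (hn : 1 ≤ n) :
    N ^ 2 * B * 3 ^ k < 2 ^ (n : ℕ) := by
  have h2 : (1 : ℝ) ≤ 2 := by norm_num
  have hnn : (0:ℝ) ≤ (n:ℝ) := Nat.cast_nonneg n
  have e1 : N ^ 2 ≤ (2 : ℝ) ^ ((n : ℝ) / 32) := by
    have : N ^ 2 ≤ ((2 : ℝ) ^ ((n : ℝ) / 64)) ^ 2 := by
      apply pow_le_pow_left₀ hN0 hN
    refine this.trans (le_of_eq ?_)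
    rw [← Real.rpow_natCast ((2:ℝ) ^ ((n:ℝ)/64)) 2, ← Real.rpow_mul (by norm_num)]
    norm_num
    ring_nf
  have e2 : (4 : ℝ) ^ m ≤ (2 : ℝ) ^ ((n : ℝ) / 4) := by
    have h4 : (4:ℝ) = (2:ℝ) ^ (2:ℝ) := by
      norm_num
    calc (4:ℝ) ^ m = (4:ℝ) ^ (m:ℝ) := by rw [Real.rpow_natCast]
      _ ≤ (4:ℝ) ^ ((n:ℝ)/8) := by
          apply Real.rpow_le_rpow_of_exponent_le (by norm_num) hm
      _ = (2:ℝ) ^ ((n:ℝ)/4) := by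
          rw [h4, ← Real.rpow_mul (by norm_num)]
          ring_nf
  have e3 : ((5:ℝ)/4) ^ n ≤ (2 : ℝ) ^ ((n : ℝ) / 3) := by
    have h54 : ((5:ℝ)/4) ≤ (2:ℝ) ^ ((1:ℝ)/3) := by
      have ha : ((5:ℝ)/4) ^ (3:ℕ) ≤ 2 := by norm_num
      have hb : (((5:ℝ)/4) ^ (3:ℕ)) ^ ((1:ℝ)/3) ≤ (2:ℝ) ^ ((1:ℝ)/3) :=
        Real.rpow_le_rpow (by positivity) ha (by norm_num)
      rwa [← Real.rpow_natCast ((5:ℝ)/4) 3, ← Real.rpow_mul (by norm_num),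
        show ((3:ℕ):ℝ) * ((1:ℝ)/3) = 1 by norm_num, Real.rpow_one] at hb
    calc ((5:ℝ)/4) ^ n = ((5:ℝ)/4) ^ (n:ℝ) := by rw [Real.rpow_natCast]
      _ ≤ ((2:ℝ) ^ ((1:ℝ)/3)) ^ (n:ℝ) :=
          Real.rpow_le_rpow (by norm_num) h54 hnn
      _ = (2:ℝ) ^ ((n:ℝ)/3) := by
          rw [← Real.rpow_mul (by norm_num)]
          ring_nf
  have e4 : (3 : ℝ) ^ k ≤ (2 : ℝ) ^ ((n : ℝ) / 20) := by
    have h3 : (3:ℝ) ≤ (2:ℝ) ^ ((8:ℝ)/5) := by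
      have ha : (3:ℝ) ^ (5:ℕ) ≤ (2:ℝ) ^ (8:ℕ) := by norm_num
      have hb : ((3:ℝ) ^ (5:ℕ)) ^ ((1:ℝ)/5) ≤ ((2:ℝ) ^ (8:ℕ)) ^ ((1:ℝ)/5) :=
        Real.rpow_le_rpow (by positivity) ha (by norm_num)
      rwa [← Real.rpow_natCast (3:ℝ) 5, ← Real.rpow_natCast (2:ℝ) 8,
        ← Real.rpow_mul (by norm_num), ← Real.rpow_mul (by norm_num),
        show ((5:ℕ):ℝ) * ((1:ℝ)/5) = 1 by norm_num, Real.rpow_one,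
        show ((8:ℕ):ℝ) * ((1:ℝ)/5) = (8:ℝ)/5 by norm_num] at hb
    calc (3:ℝ) ^ k = (3:ℝ) ^ (k:ℝ) := by rw [Real.rpow_natCast]
      _ ≤ ((2:ℝ) ^ ((8:ℝ)/5)) ^ (k:ℝ) := Real.rpow_le_rpow (by norm_num) h3 (Nat.cast_nonneg k)
      _ = (2:ℝ) ^ (((8:ℝ)/5) * (k:ℝ)) := by rw [← Real.rpow_mul (by norm_num)]
      _ ≤ (2:ℝ) ^ ((n:ℝ)/20) := by
          apply Real.rpow_le_rpow_of_exponent_le h2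
          nlinarith [hk]
  have key : N ^ 2 * B * 3 ^ k
      ≤ (2:ℝ) ^ ((n:ℝ)/32) * ((2:ℝ) ^ ((n:ℝ)/4) * (2:ℝ) ^ ((n:ℝ)/3)) * (2:ℝ) ^ ((n:ℝ)/20) := by
    have hBle : B ≤ (2:ℝ) ^ ((n:ℝ)/4) * (2:ℝ) ^ ((n:ℝ)/3) := by
      refine hB.trans ?_
      exact mul_le_mul e2 e3 (by positivity) (by positivity)
    have h1 : N ^ 2 * B ≤ (2:ℝ) ^ ((n:ℝ)/32) * ((2:ℝ) ^ ((n:ℝ)/4) * (2:ℝ) ^ ((n:ℝ)/3)) :=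
      mul_le_mul e1 hBle hB0 (by positivity)
    exact mul_le_mul h1 e4 (by positivity) (by positivity)
  refine lt_of_le_of_lt key ?_
  rw [← Real.rpow_add (by norm_num), ← Real.rpow_add (by norm_num), ← Real.rpow_add (by norm_num)]
  rw [show ((2:ℝ) ^ (n:ℕ)) = (2:ℝ) ^ ((n:ℕ):ℝ) by rw [Real.rpow_natCast]]
  apply Real.rpow_lt_rpow_of_exponent_lt (by norm_num)
  have : (1:ℝ) ≤ (n:ℝ) := by exact_mod_cast hn
  nlinarith

end Aux

/-- adaptive lower bound, main theorem: let `C ⊆ {0,1}^n` be a linear code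
with dual distance at least `Γ` and `|C| ≤ 2^{n/64}`, and let `C' ⊆ C`.  If `C` is
`C'`-partially testable with `q` adaptive queries for some `ε < 1/8` — i.e. there is a
distribution `μ` over indices `i` of `q`-readers `r i` (adaptive strategies reading `q`
distinct bits) with acceptance predicates `π i` on the readings, accepting every `x ∈ C'`
with probability `≥ 2/3` and rejecting every `x` that is `ε`-far from `C` with probability
`≥ 2/3` — then `|C'| ≤ |C| · 2^{−⌊Γ/(32q)⌋}`. -/
theorem stmt17 {n Γ q : ℕ} (ε : ℝ) (hε : ε < 1 / 8)
    (C : Submodule (ZMod 2) (Fin n → ZMod 2))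
    (hdual : ∀ y : Fin n → ZMod 2, y ≠ 0 → (∀ c ∈ C, ∑ i, y i * c i = 0) →
      Γ ≤ (Finset.univ.filter fun i => y i ≠ 0).card)
    (hsize : (Nat.card C : ℝ) ≤ 2 ^ ((n : ℝ) / 64))
    (C' : Finset (Fin n → ZMod 2)) (hC'C : ∀ x ∈ C', x ∈ C)
    {ι : Type*} [Fintype ι] (μ : ι → ℝ) (hμ0 : ∀ i, 0 ≤ μ i) (hμ1 : ∑ i, μ i = 1)
    (r : ι → (i : Fin q) → (Fin (i : ℕ) → ZMod 2) → Fin n)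
    (hnorep : ∀ t : ι, ∀ (i j : Fin q) (hij : (i : ℕ) < (j : ℕ)) (y : Fin (j : ℕ) → ZMod 2),
      r t i (fun k => y ⟨k.1, k.2.trans hij⟩) ≠ r t j y)
    (π : ι → (Fin q → ZMod 2) → Bool)
    (hacc : ∀ x ∈ C',
      (2 : ℝ) / 3 ≤ ∑ i ∈ Finset.univ.filter fun i => π i (readQ (r i) x) = true, μ i)
    (hrej : ∀ x : Fin n → ZMod 2, (∀ c ∈ C, ε * n < (hammingDist x c : ℝ)) →
      (2 : ℝ) / 3 ≤ ∑ i ∈ Finset.univ.filter fun i => π i (readQ (r i) x) = false, μ i) :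
    C'.card * 2 ^ (Γ / (32 * q)) ≤ Nat.card C := by
  classical
  set k := Γ / (32 * q) with hkdef
  -- trivial case
  by_cases hk0 : k = 0
  · rw [hk0, pow_zero, mul_one]
    calc C'.card ≤ (Finset.univ.filter (· ∈ C)).card :=
          Finset.card_le_card fun x hx => Finset.mem_filter.2 ⟨Finset.mem_univ _, hC'C x hx⟩
      _ = Nat.card C := by rw [Nat.card_eq_fintype_card, Fintype.card_subtype]
  have hk1 : 1 ≤ k := Nat.one_le_iff_ne_zero.2 hk0
  have hq1 : 1 ≤ q := by
    rcases Nat.eq_zero_or_pos q with hq | hq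
    · exfalso; apply hk0; rw [hkdef, hq, Nat.mul_zero, Nat.div_zero]
    · exact hq
  have hΓ32q : 32 * q ≤ Γ := by
    by_contra h
    push_neg at h
    exact hk0 (by rw [hkdef]; exact Nat.div_eq_of_lt h)
  have hΓ32 : 32 ≤ Γ := le_trans (by omega) hΓ32q
  -- n ≥ 1
  rcases Nat.eq_zero_or_pos n with hn0 | hn1
  · exfalso
    subst hn0
    haveI : IsEmpty ι := ⟨fun t => (r t ⟨0, hq1⟩ (fun v => v.elim0)).elim0⟩
    rw [Finset.univ_eq_empty, Finset.sum_empty] at hμ1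
    norm_num at hμ1
  -- Γ ≤ n
  have hΓn : Γ ≤ n := by
    by_cases hCtop : C = ⊤
    · exfalso
      rw [hCtop, card_top] at hsize
      push_cast at hsize
      rw [show ((2:ℝ) ^ (n:ℕ)) = (2:ℝ) ^ ((n:ℕ):ℝ) from (Real.rpow_natCast 2 n).symm] at hsize
      have := (Real.rpow_le_rpow_left_iff (by norm_num : (1:ℝ) < 2)).1 hsize
      have h1n : (1:ℝ) ≤ (n:ℝ) := by exact_mod_cast hn1
      nlinarith
    · obtain ⟨v, hv⟩ : ∃ v, v ∉ C := by
        by_contra h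
        push_neg at h
        exact hCtop (Submodule.eq_top_iff'.2 h)
      obtain ⟨f, hf0, hfbot⟩ := Submodule.exists_dual_map_eq_bot_of_notMem hv inferInstance
      set y : Fin n → ZMod 2 := fun i => f (fun j => if i = j then 1 else 0) with hy
      have hfy : ∀ u : Fin n → ZMod 2, f u = ∑ i, u i * y i := by
        intro u
        rw [LinearMap.pi_apply_eq_sum_univ f u]
        exact Finset.sum_congr rfl fun i _ => by rw [smul_eq_mul]
      have horth : ∀ c ∈ C, ∑ i, y i * c i = 0 := by
        intro c hc
        have hfc : f c = 0 := by
          have : f c ∈ Submodule.map f C := Submodule.mem_map_of_mem hc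
          rw [hfbot] at this
          exact (Submodule.mem_bot (R := ZMod 2)).1 this
        rw [hfy c] at hfc
        rw [← hfc]
        exact Finset.sum_congr rfl fun i _ => mul_comm _ _
      have hyne : y ≠ 0 := by
        intro h0
        apply hf0
        rw [hfy v, h0]
        simp
      calc Γ ≤ (Finset.univ.filter fun i => y i ≠ 0).card := hdual y hyne horth
        _ ≤ (Finset.univ : Finset (Fin n)).card := Finset.card_filter_le _ _
        _ = n := by rw [Finset.card_univ, Fintype.card_fin]
  -- main setup
  set N := Nat.card C with hNdef
  set g : (Fin n → ZMod 2) → ℝ :=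
    fun x => ∑ i ∈ Finset.univ.filter fun i => π i (readQ (r i) x) = true, μ i with hg
  have hg0 : ∀ x, 0 ≤ g x := fun x => Finset.sum_nonneg fun i _ => hμ0 i
  have hg1 : ∀ x, g x ≤ 1 := by
    intro x
    rw [← hμ1]
    exact Finset.sum_le_sum_of_subset_of_nonneg (Finset.filter_subset _ _)
      fun i _ _ => hμ0 i
  have hgfar : ∀ z : Fin n → ZMod 2, (∀ c ∈ C, ε * n < (hammingDist z c : ℝ)) →
      g z ≤ 1/3 := by
    intro z hz
    have hsub : (Finset.univ.filter fun i => π i (readQ (r i) z) = true)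
        ⊆ Finset.univ \ (Finset.univ.filter fun i => π i (readQ (r i) z) = false) := by
      intro i hi
      simp only [Finset.mem_filter] at hi
      rw [Finset.mem_sdiff]
      refine ⟨Finset.mem_univ _, fun hmem => ?_⟩
      simp only [Finset.mem_filter] at hmem
      rw [hi.2] at hmem
      simp at hmem
    have h1 : g z ≤ ∑ i ∈ Finset.univ \ (Finset.univ.filter fun i => π i (readQ (r i) z) = false), μ i :=
      Finset.sum_le_sum_of_subset_of_nonneg hsub fun i _ _ => hμ0 i
    rw [Finset.sum_sdiff_eq_sub (Finset.filter_subset _ _), hμ1] at h1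
    have h2 := hrej z hz
    linarith
  -- expansion
  have expand : ∀ s : Finset (Fin n → ZMod 2),
      ∑ x ∈ s, g x ^ k = ∑ t : Fin k → ι, (∏ j, μ (t j)) *
        ((s.filter fun x => ∀ j, π (t j) (readQ (r (t j)) x) = true).card : ℝ) := by
    intro s
    have hgx : ∀ x, g x = ∑ i, (if π i (readQ (r i) x) = true then μ i else 0) :=
      fun x => Finset.sum_filter _ _
    calc ∑ x ∈ s, g x ^ k
        = ∑ x ∈ s, ∑ t : Fin k → ι,
            ∏ j, (if π (t j) (readQ (r (t j)) x) = true then μ (t j) else 0) := by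
          refine Finset.sum_congr rfl fun x _ => ?_
          rw [hgx x, Fintype.sum_pow]
      _ = ∑ t : Fin k → ι, ∑ x ∈ s,
            ∏ j, (if π (t j) (readQ (r (t j)) x) = true then μ (t j) else 0) :=
          Finset.sum_comm
      _ = ∑ t : Fin k → ι, ∑ x ∈ s, (∏ j, μ (t j)) *
            (if (∀ j, π (t j) (readQ (r (t j)) x) = true) then (1:ℝ) else 0) := by
          refine Finset.sum_congr rfl fun t _ => Finset.sum_congr rfl fun x _ => ?_
          have : ∀ j : Fin k, (if π (t j) (readQ (r (t j)) x) = true then μ (t j) else 0)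
              = μ (t j) * (if π (t j) (readQ (r (t j)) x) = true then (1:ℝ) else 0) := by
            intro j
            split <;> simp
          rw [Finset.prod_congr rfl fun j _ => this j, Finset.prod_mul_distrib,
            Finset.prod_boole]
          simp
      _ = ∑ t : Fin k → ι, (∏ j, μ (t j)) *
            ((s.filter fun x => ∀ j, π (t j) (readQ (r (t j)) x) = true).card : ℝ) := by
          refine Finset.sum_congr rfl fun t _ => ?_
          rw [← Finset.mul_sum, Finset.sum_boole]
  -- step 1
  have step1 : (C'.card : ℝ) * (2/3)^k ≤ ∑ x ∈ C', g x ^ k := by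
    calc (C'.card : ℝ) * (2/3)^k = ∑ _x ∈ C', ((2:ℝ)/3)^k := by
          rw [Finset.sum_const, nsmul_eq_mul]
      _ ≤ ∑ x ∈ C', g x ^ k := by
          refine Finset.sum_le_sum fun x hx => ?_
          exact pow_le_pow_left₀ (by norm_num) (hacc x hx) k
  -- counting comparisons
  have hkq : k * q < Γ := by
    have h1 : k * (32 * q) ≤ Γ := Nat.div_mul_le_self Γ (32 * q)
    have h2 : k * q * 32 ≤ Γ := by
      calc k * q * 32 = k * (32 * q) := by ring
        _ ≤ Γ := h1
    have h3 : k * q ≤ Γ / 32 := (Nat.le_div_iff_mul_le (by norm_num)).2 h2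
    exact lt_of_le_of_lt h3 (Nat.div_lt_self (by omega) (by norm_num))
  have step3 : ∀ t : Fin k → ι,
      ((C'.filter fun x => ∀ j, π (t j) (readQ (r (t j)) x) = true).card : ℕ)
      ≤ cnt (fun x : Fin n → ZMod 2 => x ∈ C ∧ ∀ j, π (t j) (readQ (r (t j)) x) = true) := by
    intro t
    rw [← cnt_eq _ (fun a => Classical.propDecidable _)]
    refine Finset.card_le_card fun x hx => ?_
    simp only [Finset.mem_filter] at hx ⊢
    exact ⟨Finset.mem_univ _, hC'C x hx.1, hx.2⟩
  have step4 : ∀ t : Fin k → ι,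
      2 ^ n * cnt (fun x : Fin n → ZMod 2 => x ∈ C ∧ ∀ j, π (t j) (readQ (r (t j)) x) = true)
      = N * cnt (fun x : Fin n → ZMod 2 => ∀ j, π (t j) (readQ (r (t j)) x) = true) := by
    intro t
    exact compound_count (Γ := Γ) C hdual hkq (fun j => r (t j)) (fun j => π (t j))
  have step5 : ∀ t : Fin k → ι,
      ((Finset.univ.filter fun x : Fin n → ZMod 2 =>
        ∀ j, π (t j) (readQ (r (t j)) x) = true).card : ℕ)
      = cnt (fun x : Fin n → ZMod 2 => ∀ j, π (t j) (readQ (r (t j)) x) = true) :=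
    fun t => cnt_eq _ _
  have hprodnn : ∀ t : Fin k → ι, 0 ≤ ∏ j, μ (t j) :=
    fun t => Finset.prod_nonneg fun j _ => hμ0 (t j)
  have h2npos : (0:ℝ) < 2 ^ n := by positivity
  -- chain
  have chain : ∑ x ∈ C', g x ^ k
      ≤ ((N:ℝ)/2^n) * ∑ z : Fin n → ZMod 2, g z ^ k := by
    rw [expand C']
    have hper : ∀ t : Fin k → ι, (∏ j, μ (t j)) *
        ((C'.filter fun x => ∀ j, π (t j) (readQ (r (t j)) x) = true).card : ℝ)
        ≤ (∏ j, μ (t j)) * (((N:ℝ)/2^n) *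
          (cnt (fun x : Fin n → ZMod 2 => ∀ j, π (t j) (readQ (r (t j)) x) = true) : ℝ)) := by
      intro t
      refine mul_le_mul_of_nonneg_left ?_ (hprodnn t)
      have h3 := step3 t
      have h4 := step4 t
      have h4' : (2:ℝ)^n * (cnt (fun x : Fin n → ZMod 2 =>
          x ∈ C ∧ ∀ j, π (t j) (readQ (r (t j)) x) = true) : ℝ)
          = (N:ℝ) * (cnt (fun x : Fin n → ZMod 2 =>
            ∀ j, π (t j) (readQ (r (t j)) x) = true) : ℝ) := by
        exact_mod_cast h4
      have h3' : ((C'.filter fun x => ∀ j, π (t j) (readQ (r (t j)) x) = true).card : ℝ)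
          ≤ (cnt (fun x : Fin n → ZMod 2 =>
            x ∈ C ∧ ∀ j, π (t j) (readQ (r (t j)) x) = true) : ℝ) := by
        exact_mod_cast h3
      refine h3'.trans (le_of_eq ?_)
      field_simp
      linarith [h4']
    refine le_trans (Finset.sum_le_sum fun t _ => hper t) (le_of_eq ?_)
    rw [show (∑ z : Fin n → ZMod 2, g z ^ k) = ∑ z ∈ Finset.univ, g z ^ k from rfl]
    rw [expand Finset.univ, Finset.mul_sum]
    refine Finset.sum_congr rfl fun t _ => ?_
    rw [step5 t]
    ring
  -- far/near bound
  set m := n / 8 with hmdef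
  set B : ℕ := ∑ j ∈ Finset.range (m + 1), n.choose j with hBdef
  have farbound : ∑ z : Fin n → ZMod 2, g z ^ k
      ≤ (2:ℝ)^n * (1/3)^k + (N:ℝ) * (B:ℝ) := by
    have hVcard : (Finset.univ : Finset (Fin n → ZMod 2)).card = 2 ^ n := by
      rw [Finset.card_univ, Fintype.card_fun]
      simp
    rw [← Finset.sum_filter_add_sum_filter_not Finset.univ
      (fun z => ∀ c ∈ C, ε * n < (hammingDist z c : ℝ))]
    have part1 : ∑ z ∈ Finset.univ.filter (fun z => ∀ c ∈ C, ε * n < (hammingDist z c : ℝ)),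
        g z ^ k ≤ (2:ℝ)^n * (1/3)^k := by
      have heach : ∀ z ∈ Finset.univ.filter (fun z : Fin n → ZMod 2 =>
          ∀ c ∈ C, ε * n < (hammingDist z c : ℝ)), g z ^ k ≤ (1/3:ℝ)^k := by
        intro z hz
        simp only [Finset.mem_filter] at hz
        exact pow_le_pow_left₀ (hg0 z) (hgfar z hz.2) k
      refine le_trans (Finset.sum_le_sum heach) ?_
      rw [Finset.sum_const, nsmul_eq_mul]
      refine mul_le_mul_of_nonneg_right ?_ (by positivity)
      calc ((Finset.univ.filter (fun z : Fin n → ZMod 2 =>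
            ∀ c ∈ C, ε * n < (hammingDist z c : ℝ))).card : ℝ)
          ≤ ((Finset.univ : Finset (Fin n → ZMod 2)).card : ℝ) := by
            exact_mod_cast Finset.card_le_card (Finset.filter_subset _ _)
        _ = (2:ℝ)^n := by rw [hVcard]; push_cast; ring
    have part2 : ∑ z ∈ Finset.univ.filter (fun z : Fin n → ZMod 2 =>
        ¬ ∀ c ∈ C, ε * n < (hammingDist z c : ℝ)), g z ^ k ≤ (N:ℝ) * (B:ℝ) := by
      have heach : ∀ z ∈ Finset.univ.filter (fun z : Fin n → ZMod 2 =>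
          ¬ ∀ c ∈ C, ε * n < (hammingDist z c : ℝ)), g z ^ k ≤ 1 := by
        intro z _
        exact pow_le_one₀ (hg0 z) (hg1 z)
      refine le_trans (Finset.sum_le_sum heach) ?_
      rw [Finset.sum_const, nsmul_eq_mul, mul_one]
      have hnear : (Finset.univ.filter (fun z : Fin n → ZMod 2 =>
          ¬ ∀ c ∈ C, ε * n < (hammingDist z c : ℝ))).card ≤ N * B := by
        rw [cnt_eq _ _]
        refine le_trans (cnt_mono (pr' := fun z : Fin n → ZMod 2 =>
          ∃ c, c ∈ C ∧ hammingDist z c ≤ m) ?_) ?_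
        · intro z hz
          push_neg at hz
          obtain ⟨c, hcC, hd⟩ := hz
          refine ⟨c, hcC, ?_⟩
          have hdr : ((hammingDist z c : ℕ) : ℝ) < (n:ℝ)/8 := by
            have hεn : ε * n < (n:ℝ)/8 := by
              have h0n : (0:ℝ) < (n:ℝ) := by exact_mod_cast hn1
              nlinarith
            linarith
          have h8 : 8 * hammingDist z c < n := by
            have : ((8 * hammingDist z c : ℕ) : ℝ) < (n : ℝ) := by push_cast; linarith
            exact_mod_cast this
          rw [hmdef]
          omega
        · exact near_count C
      exact_mod_cast hnear
    linarith
  -- numeric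
  have hmr : (m : ℝ) ≤ (n:ℝ)/8 := by
    rw [hmdef]
    exact_mod_cast Nat.cast_div_le
  have hkr : (k : ℝ) ≤ (n:ℝ)/32 := by
    have h1 : k ≤ n / 32 := by
      rw [hkdef]
      calc Γ / (32 * q) ≤ Γ / 32 := Nat.div_le_div_left (by omega) (by norm_num)
        _ ≤ n / 32 := Nat.div_le_div_right hΓn
    calc (k:ℝ) ≤ ((n/32 : ℕ) : ℝ) := by exact_mod_cast h1
      _ ≤ (n:ℝ)/32 := by exact_mod_cast Nat.cast_div_le
  have hBr : (B:ℝ) ≤ 4 ^ m * (5/4) ^ n := B_bound (by rw [hmdef]; omega)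
  have hnum : (N:ℝ)^2 * (B:ℝ) * 3^k < 2^(n:ℕ) :=
    numeric_bound (N:ℝ) (B:ℝ) (Nat.cast_nonneg N) (Nat.cast_nonneg B)
      hsize hkr hmr hBr hn1
  -- final assembly
  have main : (C'.card : ℝ) * (2/3)^k ≤ ((N:ℝ)/2^n) * ((2:ℝ)^n * (1/3)^k + (N:ℝ)*(B:ℝ)) := by
    refine le_trans step1 (le_trans chain ?_)
    refine mul_le_mul_of_nonneg_left farbound ?_
    positivity
  have h3kpos : (0:ℝ) < 3^k := by positivity
  have hfinal : (C'.card : ℝ) * 2^k < (N:ℝ) + 1 := by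
    have hmul := mul_le_mul_of_nonneg_right main (le_of_lt h3kpos)
    have e1 : (C'.card : ℝ) * (2/3)^k * 3^k = (C'.card : ℝ) * 2^k := by
      rw [mul_assoc, ← mul_pow]
      norm_num
    have e2 : ((N:ℝ)/2^n) * ((2:ℝ)^n * (1/3)^k + (N:ℝ)*(B:ℝ)) * 3^k
        = (N:ℝ) * ((1/3:ℝ)^k * 3^k) + (N:ℝ)^2*(B:ℝ)*3^k/2^n := by
      field_simp
    have e3 : ((1/3:ℝ))^k * 3^k = 1 := by
      rw [← mul_pow]
      norm_num
    rw [e1, e2, e3, mul_one] at hmul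
    have hlt : (N:ℝ)^2*(B:ℝ)*3^k/2^n < 1 := (div_lt_one h2npos).2 hnum
    linarith
  have hnat : C'.card * 2^k < N + 1 := by
    have : ((C'.card * 2^k : ℕ) : ℝ) < ((N + 1 : ℕ) : ℝ) := by
      push_cast
      linarith
    exact_mod_cast this
  omega
end

section
/- Let C' ⊆ {0,1}^n, J ⊆ [n], and for y in the image C'[J] let X_y be uniform on {c ∈ C' : c[J] = y}. Let r be any q-reader whose first |J| reads are exactly the coordinates of J. If for each y, the distribution of the last q−|J| read values of X_y under r is at total variation distance ≥ 1/8 from the uniform distribution on {0,1}^{q−|J|} (averaged appropriately), then for X uniform on C', H[first q read values of X] ≤ q − 1/32. -/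
open Finset
open scoped Classical

/-- Base-2 Shannon entropy of a distribution on a finite type. -/
noncomputable def entropy2 {D : Type*} [Fintype D] (p : D → ℝ) : ℝ :=
  -∑ i, p i * Real.logb 2 (p i)

/-- Total variation distance between two distributions on a finite type. -/
noncomputable def dTV {D : Type*} [Fintype D] (p q : D → ℝ) : ℝ :=
  (1 / 2) * ∑ i, |p i - q i|

/-- The reading of input `x ∈ {0,1}^n` according to a `q`-reader `r`. -/
def readB {n q : ℕ} (r : (i : Fin q) → (Fin (i : ℕ) → Bool) → Fin n)
    (x : Fin n → Bool) (i : Fin q) : Bool :=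
  x (r i (fun k => readB r x ⟨k.1, k.2.trans i.2⟩))
termination_by i.1
decreasing_by exact k.2

/-- Binary Pinsker inequality (natural log). -/
lemma binPinsker {a b : ℝ} (hb : 0 < b) (hb1 : b < 1) (hba : b ≤ a) (ha1 : a ≤ 1) :
    2 * (a - b) ^ 2 ≤ a * Real.log a - a * Real.log b
      + (1 - a) * Real.log (1 - a) - (1 - a) * Real.log (1 - b) := by
  set φ : ℝ → ℝ := fun t => t * Real.log t - t * Real.log b
      + (1 - t) * Real.log (1 - t) - (1 - t) * Real.log (1 - b) - 2 * (t - b) ^ 2 with hφ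
  set ψ : ℝ → ℝ := fun t => Real.log t - Real.log b - Real.log (1 - t) + Real.log (1 - b)
      - 4 * (t - b) with hψ
  have hψd : ∀ t ∈ Set.Ioo b 1, HasDerivAt ψ (1 / t + 1 / (1 - t) - 4) t := by
    intro t ht
    obtain ⟨htb, ht1⟩ := ht
    have ht0 : (0:ℝ) < t := hb.trans htb
    have h1t : (0:ℝ) < 1 - t := by linarith
    have h1 : HasDerivAt (fun t : ℝ => Real.log t) (1 / t) t := by
      simpa [one_div] using Real.hasDerivAt_log (ne_of_gt ht0)
    have h2 : HasDerivAt (fun t : ℝ => Real.log (1 - t)) (-(1 - t)⁻¹) t := by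
      have hlin : HasDerivAt (fun t : ℝ => (1:ℝ) - t) (-1) t := by
        simpa using (hasDerivAt_id t).const_sub (1:ℝ)
      have := hlin.log (ne_of_gt h1t); rw [neg_div, one_div] at this; exact this
    have h3 : HasDerivAt (fun t : ℝ => 4 * (t - b)) 4 t := by
      simpa using ((hasDerivAt_id t).sub (hasDerivAt_const t b)).const_mul (4:ℝ)
    have h5 := (((h1.sub (hasDerivAt_const t (Real.log b))).sub h2).add
      (hasDerivAt_const t (Real.log (1 - b)))).sub h3
    have h5' : HasDerivAt ψ _ t := h5
    convert h5' using 1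
    rw [one_div, one_div]
    ring
  have hψmono : MonotoneOn ψ (Set.Ico b 1) := by
    apply monotoneOn_of_deriv_nonneg (convex_Ico b 1)
    · have c1 : ContinuousOn (fun t : ℝ => Real.log t) (Set.Ico b 1) := by
        apply Real.continuousOn_log.mono
        intro t ht hc
        simp only [Set.mem_singleton_iff] at hc
        rw [hc] at ht
        exact absurd ht.1 (not_le.mpr hb)
      have c2 : ContinuousOn (fun t : ℝ => Real.log (1 - t)) (Set.Ico b 1) := by
        apply ContinuousOn.comp Real.continuousOn_log (by fun_prop)
        intro t ht hc
        simp only [Set.mem_singleton_iff] at hc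
        have := ht.2
        nlinarith [hc]
      exact ((((c1.sub continuousOn_const).sub c2).add continuousOn_const).sub (by fun_prop))
    · rw [interior_Ico]
      intro t ht
      exact ((hψd t ht).differentiableAt).differentiableWithinAt
    · rw [interior_Ico]
      intro t ht
      rw [(hψd t ht).deriv]
      obtain ⟨htb, ht1⟩ := ht
      have ht0 : (0:ℝ) < t := hb.trans htb
      have h1t : (0:ℝ) < 1 - t := by linarith
      have h4 : (0:ℝ) < t * (1 - t) := by positivity
      rw [div_add_div _ _ (ne_of_gt ht0) (ne_of_gt h1t), sub_nonneg, ← sub_nonneg]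
      have h6 : 4 ≤ (1 * (1 - t) + t * 1) / (t * (1 - t)) := by
        rw [le_div_iff₀ h4]; nlinarith [sq_nonneg (2 * t - 1)]
      linarith
  have hψb : ψ b = 0 := by simp [hψ]
  have hψnonneg : ∀ t ∈ Set.Ioo b 1, 0 ≤ ψ t := by
    intro t ht
    have := hψmono (Set.left_mem_Ico.mpr hb1) ⟨le_of_lt ht.1, ht.2⟩ (le_of_lt ht.1)
    rwa [hψb] at this
  have hφd : ∀ t ∈ Set.Ioo b 1, HasDerivAt φ (ψ t) t := by
    intro t ht
    obtain ⟨htb, ht1⟩ := ht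
    have ht0 : (0:ℝ) < t := hb.trans htb
    have h1t : (0:ℝ) < 1 - t := by linarith
    have h1 : HasDerivAt (fun t : ℝ => t * Real.log t) (Real.log t + 1) t :=
      Real.hasDerivAt_mul_log (ne_of_gt ht0)
    have h2 : HasDerivAt (fun t : ℝ => t * Real.log b) (Real.log b) t := by
      simpa using hasDerivAt_mul_const (x := t) (Real.log b)
    have hlin : HasDerivAt (fun t : ℝ => (1:ℝ) - t) (-1) t := by
      simpa using (hasDerivAt_id t).const_sub (1:ℝ)
    have h3 : HasDerivAt (fun t : ℝ => (1 - t) * Real.log (1 - t))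
        ((Real.log (1 - t) + 1) * (-1)) t :=
      (Real.hasDerivAt_mul_log (ne_of_gt h1t)).comp t hlin
    have h4 : HasDerivAt (fun t : ℝ => (1 - t) * Real.log (1 - b)) (-Real.log (1 - b)) t := by
      simpa using hlin.mul_const (Real.log (1 - b))
    have h5 : HasDerivAt (fun t : ℝ => 2 * (t - b) ^ 2) (2 * (2 * (t - b))) t := by
      have := ((hasDerivAt_id t).sub_const b).pow 2
      simpa using this.const_mul (2:ℝ)
    have h6 := (((h1.sub h2).add h3).sub h4).sub h5
    have h6' : HasDerivAt φ _ t := h6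
    convert h6' using 1
    simp only [hψ]
    ring
  have hφmono : MonotoneOn φ (Set.Icc b 1) := by
    apply monotoneOn_of_deriv_nonneg (convex_Icc b 1)
    · apply Continuous.continuousOn
      have cm : Continuous fun t : ℝ => t * Real.log t := Real.continuous_mul_log
      have cm2 : Continuous fun t : ℝ => (1 - t) * Real.log (1 - t) :=
        cm.comp (continuous_const.sub continuous_id)
      fun_prop
    · rw [interior_Icc]
      intro t ht
      exact ((hφd t ht).differentiableAt).differentiableWithinAt
    · rw [interior_Icc]
      intro t ht
      rw [(hφd t ht).deriv]
      exact hψnonneg t ht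
  have hφb : φ b = 0 := by simp [hφ]
  have hφa : 0 ≤ φ a := by
    have := hφmono (Set.mem_Icc.mpr ⟨le_refl b, le_of_lt hb1⟩) (Set.mem_Icc.mpr ⟨hba, ha1⟩) hba
    rwa [hφb] at this
  simp only [hφ] at hφa
  linarith

/-- Grouped Gibbs / log-sum inequality, natural log. -/
lemma logSum {D : Type*} [Fintype D] (S : Finset D) (p : D → ℝ) (hp : ∀ i ∈ S, 0 ≤ p i) :
    -∑ i ∈ S, p i * Real.log (p i) ≤
      (∑ i ∈ S, p i) * Real.log (S.card) - (∑ i ∈ S, p i) * Real.log (∑ i ∈ S, p i) := by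
  set t := ∑ i ∈ S, p i with ht
  rcases eq_or_lt_of_le (Finset.sum_nonneg hp) with h0 | h0
  · -- t = 0 : all p i = 0 on S
    have hz : ∀ i ∈ S, p i = 0 := by
      intro i hi
      exact (Finset.sum_eq_zero_iff_of_nonneg hp).mp h0.symm i hi
    have : ∑ i ∈ S, p i * Real.log (p i) = 0 :=
      Finset.sum_eq_zero (fun i hi => by rw [hz i hi]; ring)
    rw [this, ht, ← h0]
    simp
  · have hS : S.Nonempty := by
      by_contra h
      rw [Finset.not_nonempty_iff_eq_empty] at h
      rw [h] at h0; simp at h0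
    have hk : (0:ℝ) < S.card := by exact_mod_cast Finset.card_pos.mpr hS
    have key : ∀ i ∈ S, p i * Real.log t - p i * Real.log S.card - p i * Real.log (p i)
        ≤ t / S.card - p i := by
      intro i hi
      rcases eq_or_lt_of_le (hp i hi) with hpi | hpi
      · rw [← hpi]; simp; positivity
      · have hx : (0:ℝ) < t / (S.card * p i) := by positivity
        have := Real.log_le_sub_one_of_pos hx
        have hlog : Real.log (t / (S.card * p i))
            = Real.log t - Real.log S.card - Real.log (p i) := by
          rw [Real.log_div (ne_of_gt h0) (by positivity), Real.log_mul (ne_of_gt hk) (ne_of_gt hpi)]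
          ring
        have h2 : p i * Real.log (t / (S.card * p i)) ≤ p i * (t / (S.card * p i) - 1) :=
          mul_le_mul_of_nonneg_left this (le_of_lt hpi)
        rw [hlog] at h2
        have h3 : p i * (t / (S.card * p i) - 1) = t / S.card - p i := by
          field_simp
        rw [h3] at h2
        linarith [h2]
    have hsum := Finset.sum_le_sum key
    rw [Finset.sum_sub_distrib, Finset.sum_sub_distrib, ← Finset.sum_mul, ← Finset.sum_mul,
      Finset.sum_sub_distrib, Finset.sum_const, nsmul_eq_mul] at hsum
    rw [← ht] at hsum
    have : (S.card : ℝ) * (t / S.card) = t := by field_simp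
    rw [this] at hsum
    linarith

lemma log_two_mem : 0 < Real.log 2 ∧ Real.log 2 < 1 := by
  constructor
  · exact Real.log_pos (by norm_num)
  · calc Real.log 2 < 0.6931471808 := Real.log_two_lt_d9
      _ < 1 := by norm_num

/-- logb-2 version of the log-sum inequality. -/
lemma logSum2 {D : Type*} [Fintype D] (S : Finset D) (p : D → ℝ) (hp : ∀ i ∈ S, 0 ≤ p i) :
    -∑ i ∈ S, p i * Real.logb 2 (p i) ≤
      (∑ i ∈ S, p i) * Real.logb 2 (S.card) - (∑ i ∈ S, p i) * Real.logb 2 (∑ i ∈ S, p i) := by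
  have h := logSum S p hp
  obtain ⟨hl0, hl1⟩ := log_two_mem
  have e1 : ∀ x y : ℝ, x * Real.logb 2 y = (x * Real.log y) / Real.log 2 := by
    intro x y; rw [Real.logb]; ring
  have eL : -∑ i ∈ S, p i * Real.logb 2 (p i)
      = (-∑ i ∈ S, p i * Real.log (p i)) / Real.log 2 := by
    simp only [e1]
    rw [← Finset.sum_div, neg_div]
  have eR : (∑ i ∈ S, p i) * Real.logb 2 (S.card) - (∑ i ∈ S, p i) * Real.logb 2 (∑ i ∈ S, p i)
      = ((∑ i ∈ S, p i) * Real.log (S.card) - (∑ i ∈ S, p i) * Real.log (∑ i ∈ S, p i))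
        / Real.log 2 := by
    rw [Real.logb, Real.logb]; ring
  rw [eL, eR]
  gcongr


lemma maxEntropy {D : Type*} [Fintype D] (p : D → ℝ) (h0 : ∀ i, 0 ≤ p i)
    (h1 : ∑ i, p i = 1) : entropy2 p ≤ Real.logb 2 (Fintype.card D) := by
  have h := logSum2 Finset.univ p (fun i _ => h0 i)
  have h2 : ((Finset.univ : Finset D).card : ℝ) = (Fintype.card D : ℝ) := rfl
  rw [h1, h2, Real.logb_one] at h
  rw [entropy2]
  simpa using h

set_option maxHeartbeats 1600000 in
lemma entropy2_le_of_dTV {D : Type*} [Fintype D] (p : D → ℝ) (h0 : ∀ i, 0 ≤ p i)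
    (h1 : ∑ i, p i = 1)
    (hd : 1 / 8 ≤ dTV p (fun _ => 1 / (Fintype.card D : ℝ))) :
    entropy2 p ≤ Real.logb 2 (Fintype.card D) - 1 / 32 := by
  classical
  set N := Fintype.card D with hN
  have hDne : Nonempty D := by
    by_contra h
    simp only [not_nonempty_iff] at h
    rw [Finset.univ_eq_empty, Finset.sum_empty] at h1
    norm_num at h1
  have hN0 : 0 < N := Fintype.card_pos
  have hNR : (0:ℝ) < N := by exact_mod_cast hN0
  set A : Finset D := Finset.univ.filter (fun i => 1 / (N:ℝ) ≤ p i) with hA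
  set k := A.card with hk
  set a := ∑ i ∈ A, p i with ha
  have hAc : (Finset.univ.filter (fun i => ¬ (1 / (N:ℝ) ≤ p i))).card = N - k := by
    have h' := Finset.card_filter_add_card_filter_not
      (s := (Finset.univ : Finset D)) (p := fun i => 1 / (N:ℝ) ≤ p i)
    rw [← hA] at h'
    have hu : (Finset.univ : Finset D).card = N := rfl
    omega
  have hkN : k ≤ N := by
    have : A ⊆ Finset.univ := Finset.subset_univ A
    simpa [hN] using Finset.card_le_card this
  have hsplit : a + ∑ i ∈ Finset.univ.filter (fun i => ¬ (1 / (N:ℝ) ≤ p i)), p i = 1 := by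
    rw [ha, hA, Finset.sum_filter_add_sum_filter_not, h1]
  -- dTV = a - k/N
  have hdtv : dTV p (fun _ => 1 / (N:ℝ)) = a - k / N := by
    rw [dTV]
    rw [← Finset.sum_filter_add_sum_filter_not Finset.univ (fun i => 1 / (N:ℝ) ≤ p i)]
    have e1 : ∑ i ∈ A, |p i - 1 / (N:ℝ)| = a - k / N := by
      rw [Finset.sum_congr rfl (fun i hi => abs_of_nonneg
        (by simp [hA, one_div] at hi ⊢; linarith))]
      rw [Finset.sum_sub_distrib, Finset.sum_const, nsmul_eq_mul, ← ha, ← hk]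
      ring
    have e2 : ∑ i ∈ Finset.univ.filter (fun i => ¬ (1 / (N:ℝ) ≤ p i)), |p i - 1 / (N:ℝ)|
        = ((N:ℝ) - k) / N - (1 - a) := by
      rw [Finset.sum_congr rfl (fun i hi => abs_of_nonpos
        (by simp [hA, one_div] at hi ⊢; linarith))]
      rw [Finset.sum_neg_distrib, Finset.sum_sub_distrib, Finset.sum_const, nsmul_eq_mul, hAc]
      have : ∑ i ∈ Finset.univ.filter (fun i => ¬ (1 / (N:ℝ) ≤ p i)), p i = 1 - a := by
        linarith
      rw [this]
      push_cast [hkN]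
      field_simp
      ring
    rw [e1, e2]
    have : ((N:ℝ) - k) / N = 1 - k / N := by field_simp
    rw [this]
    ring
  rw [hdtv] at hd
  -- a ≤ 1
  have hA1 : a ≤ 1 := by
    have : 0 ≤ ∑ i ∈ Finset.univ.filter (fun i => ¬ (1 / (N:ℝ) ≤ p i)), p i :=
      Finset.sum_nonneg (fun i _ => h0 i)
    linarith
  -- k ≥ 1
  have hk1 : 1 ≤ k := by
    by_contra h
    push_neg at h
    interval_cases k
    · have hAe : A = ∅ := Finset.card_eq_zero.mp hk.symm
      have : ∀ i ∈ Finset.univ, p i < 1 / (N:ℝ) := by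
        intro i _
        by_contra hc
        push_neg at hc
        have : i ∈ A := by simp [hA, one_div]; rw [one_div] at hc; exact hc
        rw [hAe] at this; simp at this
      have hlt := Finset.sum_lt_sum_of_nonempty Finset.univ_nonempty this
      rw [h1, Finset.sum_const, nsmul_eq_mul] at hlt
      have : (Finset.univ : Finset D).card = N := rfl
      rw [this] at hlt
      rw [mul_one_div, div_self (ne_of_gt hNR)] at hlt
      linarith
  have hkR : (0:ℝ) < k := by exact_mod_cast hk1
  -- k < N
  have hkltN : k < N := by
    by_contra h
    push_neg at h
    have hkN' : k = N := le_antisymm hkN h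
    have : (k:ℝ) / N = 1 := by rw [hkN']; field_simp
    rw [this] at hd
    linarith
  have hNkR : (0:ℝ) < (N:ℝ) - k := by
    have : (k:ℝ) < N := by exact_mod_cast hkltN
    linarith
  -- entropy bound via logSum2 on A and Aᶜ
  have hEnt : entropy2 p ≤ a * Real.logb 2 k - a * Real.logb 2 a
      + (1 - a) * Real.logb 2 ((N:ℝ) - k) - (1 - a) * Real.logb 2 (1 - a) := by
    rw [entropy2,
      ← Finset.sum_filter_add_sum_filter_not Finset.univ (fun i => 1 / (N:ℝ) ≤ p i), neg_add]
    have hB1 := logSum2 A p (fun i _ => h0 i)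
    have hB2 := logSum2 (Finset.univ.filter (fun i => ¬ (1 / (N:ℝ) ≤ p i))) p (fun i _ => h0 i)
    rw [← ha, ← hk] at hB1
    have hsum2 : ∑ i ∈ Finset.univ.filter (fun i => ¬ (1 / (N:ℝ) ≤ p i)), p i = 1 - a := by
      linarith
    rw [hsum2, hAc] at hB2
    have hcast : ((N - k : ℕ) : ℝ) = (N:ℝ) - k := by push_cast [hkN]; ring
    rw [hcast] at hB2
    have : -∑ i ∈ A, p i * Real.logb 2 (p i) ≤ a * Real.logb 2 k - a * Real.logb 2 a := hB1
    linarith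
  -- binary Pinsker
  set bb : ℝ := (k:ℝ) / N with hbb
  have hbb0 : 0 < bb := by positivity
  have hbb1 : bb < 1 := by
    rw [hbb, div_lt_one hNR]
    exact_mod_cast hkltN
  have hbba : bb ≤ a := by linarith
  have hP := binPinsker hbb0 hbb1 hbba hA1
  have hL : 1 / 32 ≤ a * Real.log a - a * Real.log bb
      + (1 - a) * Real.log (1 - a) - (1 - a) * Real.log (1 - bb) := by
    nlinarith [hP, hd, sq_nonneg (a - bb - 1/8)]
  obtain ⟨hl0, hl1⟩ := log_two_mem
  -- identify logb2 N - RHS with L / log 2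
  have hkey : Real.logb 2 (N:ℝ) - (a * Real.logb 2 k - a * Real.logb 2 a
      + (1 - a) * Real.logb 2 ((N:ℝ) - k) - (1 - a) * Real.logb 2 (1 - a))
      = (a * Real.log a - a * Real.log bb
      + (1 - a) * Real.log (1 - a) - (1 - a) * Real.log (1 - bb)) / Real.log 2 := by
    have e1 : Real.log bb = Real.log k - Real.log N := by
      rw [hbb, Real.log_div (ne_of_gt hkR) (ne_of_gt hNR)]
    have e2 : Real.log (1 - bb) = Real.log ((N:ℝ) - k) - Real.log N := by
      have : 1 - bb = ((N:ℝ) - k) / N := by rw [hbb]; field_simp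
      rw [this, Real.log_div (ne_of_gt hNkR) (ne_of_gt hNR)]
    simp only [Real.logb, e1, e2]
    ring
  have hfinal : 1 / 32 ≤ Real.logb 2 (N:ℝ) - (a * Real.logb 2 k - a * Real.logb 2 a
      + (1 - a) * Real.logb 2 ((N:ℝ) - k) - (1 - a) * Real.logb 2 (1 - a)) := by
    rw [hkey]
    calc (1:ℝ) / 32 ≤ a * Real.log a - a * Real.log bb
        + (1 - a) * Real.log (1 - a) - (1 - a) * Real.log (1 - bb) := hL
      _ ≤ (a * Real.log a - a * Real.log bb
        + (1 - a) * Real.log (1 - a) - (1 - a) * Real.log (1 - bb)) / Real.log 2 := by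
        rw [le_div_iff₀ hl0]
        nlinarith [hL, hl1, hl0]
  linarith

set_option maxHeartbeats 1000000 in
/-- let `C' ⊆ {0,1}^n`, `J ⊆ [n]`, and let `r` be a `q`-reader whose first
`|J|` reads are coordinates of `J`.  For each prefix value `y`, let `X_y` be uniform on the
codewords of `C'` whose reading has prefix `y`.  If for each attained `y` the distribution
of the last `q − |J|` read values of `X_y` is at total variation distance `≥ 1/8` from
uniform on `{0,1}^{q−|J|}`, then for `X` uniform on `C'`, the entropy of the `q` read values
of `X` is at most `q − 1/32`. -/
theorem stmt19 {n q : ℕ} (J : Finset (Fin n)) (hJq : J.card ≤ q)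
    (r : (i : Fin q) → (Fin (i : ℕ) → Bool) → Fin n)
    (hnorep : ∀ (i j : Fin q) (hij : (i : ℕ) < (j : ℕ)) (y : Fin (j : ℕ) → Bool),
      r i (fun k => y ⟨k.1, k.2.trans hij⟩) ≠ r j y)
    (hfirst : ∀ (i : Fin q), (i : ℕ) < J.card → ∀ y : Fin (i : ℕ) → Bool, r i y ∈ J)
    (C' : Finset (Fin n → Bool)) (hC' : C'.Nonempty)
    (hdisc : ∀ y : Fin J.card → Bool,
      (C'.filter fun x =>
          (fun k : Fin J.card => readB r x ⟨k.1, lt_of_lt_of_le k.2 hJq⟩) = y).Nonempty →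
      (1 : ℝ) / 8 ≤ dTV
        (fun w : Fin (q - J.card) → Bool =>
          ((C'.filter fun x =>
              (fun k : Fin J.card => readB r x ⟨k.1, lt_of_lt_of_le k.2 hJq⟩) = y ∧
              (fun k : Fin (q - J.card) =>
                readB r x ⟨J.card + k.1, by have := k.2; omega⟩) = w).card : ℝ) /
            ((C'.filter fun x =>
              (fun k : Fin J.card => readB r x ⟨k.1, lt_of_lt_of_le k.2 hJq⟩) = y).card : ℝ))
        (fun _ => 1 / 2 ^ (q - J.card))) :
    entropy2 (fun v : Fin q → Bool =>
        ((C'.filter fun x => readB r x = v).card : ℝ) / (C'.card : ℝ)) ≤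
      (q : ℝ) - 1 / 32 := by
  classical
  set m := J.card with hm
  set s' := q - J.card with hs'
  have hms : m + s' = q := by omega
  set c := C'.card with hcdef
  have hc : 0 < c := Finset.card_pos.mpr hC'
  have hcR : (0:ℝ) < c := by exact_mod_cast hc
  -- prefix and suffix of the reading
  set Pre : (Fin n → Bool) → (Fin m → Bool) :=
    fun x => (fun k : Fin J.card => readB r x ⟨k.1, lt_of_lt_of_le k.2 hJq⟩) with hPre
  set Suf : (Fin n → Bool) → (Fin s' → Bool) :=
    fun x => (fun k : Fin (q - J.card) =>
      readB r x ⟨J.card + k.1, by have := k.2; omega⟩) with hSuf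
  set A : (Fin m → Bool) → (Fin s' → Bool) → ℕ :=
    fun y w => (C'.filter fun x => Pre x = y ∧ Suf x = w).card with hA
  set B : (Fin m → Bool) → ℕ := fun y => (C'.filter fun x => Pre x = y).card with hB
  -- the splitting equivalence
  let E : (Fin q → Bool) ≃ (Fin m → Bool) × (Fin s' → Bool) :=
    { toFun := fun v => (fun k => v ⟨k.1, lt_of_lt_of_le k.2 hJq⟩,
        fun k => v ⟨J.card + k.1, by have := k.2; omega⟩)
      invFun := fun yw => fun i => if h : i.1 < J.card then yw.1 ⟨i.1, h⟩
        else yw.2 ⟨i.1 - J.card, by have := i.2; omega⟩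
      left_inv := by
        intro v
        funext i
        by_cases h : i.1 < J.card
        · simp only [h, dif_pos]
        · simp only [h, dif_neg, not_false_iff]
          congr 1
          exact Fin.ext (by first | omega | (simp only [Fin.val_mk]; omega) | (simp; omega))
      right_inv := by
        intro yw
        refine Prod.ext ?_ ?_
        · funext k
          have hk : (k.1 : ℕ) < J.card := k.2
          simp only [hk, dif_pos]
        · funext k
          have hk : ¬ (J.card + k.1 < J.card) := by omega
          simp only [hk, dif_neg, not_false_iff, Nat.add_sub_cancel_left, Fin.eta] }
  -- the filter for the full reading splits
  have hfilt : ∀ v : Fin q → Bool,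
      (C'.filter fun x => readB r x = v)
        = C'.filter (fun x => Pre x = (E v).1 ∧ Suf x = (E v).2) := by
    intro v
    apply Finset.filter_congr
    intro x _
    constructor
    · intro h
      subst h
      exact ⟨rfl, rfl⟩
    · rintro ⟨h1, h2⟩
      funext i
      by_cases hi : i.1 < J.card
      · exact congrFun h1 ⟨i.1, hi⟩
      · have hi2 : i.1 - J.card < s' := by have := i.2; omega
        have hieq : i = ⟨J.card + (i.1 - J.card), by have := i.2; omega⟩ :=
          Fin.ext (by first | omega | (simp only [Fin.val_mk]; omega) | (simp; omega))
        rw [hieq]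
        exact congrFun h2 ⟨i.1 - J.card, hi2⟩
  -- fiberwise sums
  have hAB : ∀ y, ∑ w, (A y w : ℝ) = (B y : ℝ) := by
    intro y
    have hfib := Finset.card_eq_sum_card_fiberwise
      (s := C'.filter (fun x => Pre x = y)) (t := Finset.univ) (f := Suf)
      (fun x _ => Finset.mem_univ _)
    have hff : ∀ w, ((C'.filter (fun x => Pre x = y)).filter (fun x => Suf x = w))
        = C'.filter (fun x => Pre x = y ∧ Suf x = w) := by
      intro w
      rw [Finset.filter_filter]
    rw [Finset.sum_congr rfl (fun w _ => by rw [hff w])] at hfib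
    exact_mod_cast hfib.symm
  have hBc : ∑ y, (B y : ℝ) = (c : ℝ) := by
    have hfib := Finset.card_eq_sum_card_fiberwise
      (s := C') (t := Finset.univ) (f := Pre) (fun x _ => Finset.mem_univ _)
    exact_mod_cast hfib.symm
  -- cardinality facts
  have hcards : (Fintype.card (Fin s' → Bool) : ℝ) = (2:ℝ) ^ s' := by
    rw [Fintype.card_fun]
    push_cast [Fintype.card_bool, Fintype.card_fin]
    ring
  have hcardm : (Fintype.card (Fin m → Bool) : ℝ) = (2:ℝ) ^ m := by
    rw [Fintype.card_fun]
    push_cast [Fintype.card_bool, Fintype.card_fin]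
    ring
  have hlogs : Real.logb 2 ((2:ℝ) ^ s') = (s' : ℝ) := by
    rw [Real.logb_pow, Real.logb_self_eq_one (by norm_num), mul_one]
  have hlogm : Real.logb 2 ((2:ℝ) ^ m) = (m : ℝ) := by
    rw [Real.logb_pow, Real.logb_self_eq_one (by norm_num), mul_one]
  -- per-prefix bound
  have hpery : ∀ y : Fin m → Bool,
      -∑ w, ((A y w : ℝ)/c) * Real.logb 2 ((A y w : ℝ)/c)
        ≤ ((B y : ℝ)/c) * ((s' : ℝ) - 1/32) - ((B y : ℝ)/c) * Real.logb 2 ((B y : ℝ)/c) := by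
    intro y
    by_cases hBy : B y = 0
    · have hA0 : ∀ w, A y w = 0 := by
        intro w
        have hsub : (C'.filter fun x => Pre x = y ∧ Suf x = w)
            ⊆ (C'.filter fun x => Pre x = y) := by
          intro x hx
          simp only [Finset.mem_filter] at hx ⊢
          exact ⟨hx.1, hx.2.1⟩
        have hle : A y w ≤ B y := Finset.card_le_card hsub
        omega
      simp [hA0, hBy]
    · have hBpos : (0:ℝ) < (B y : ℝ) := by
        exact_mod_cast Nat.pos_of_ne_zero hBy
      set p : (Fin s' → Bool) → ℝ := fun w => (A y w : ℝ) / (B y : ℝ) with hp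
      have hp0 : ∀ w, 0 ≤ p w := fun w =>
        div_nonneg (Nat.cast_nonneg _) (Nat.cast_nonneg _)
      have hp1 : ∑ w, p w = 1 := by
        simp only [hp]
        rw [← Finset.sum_div, hAB y, div_self (ne_of_gt hBpos)]
      have hne : (C'.filter fun x =>
          (fun k : Fin J.card => readB r x ⟨k.1, lt_of_lt_of_le k.2 hJq⟩) = y).Nonempty := by
        apply Finset.card_pos.mp
        have : B y = (C'.filter fun x =>
            (fun k : Fin J.card => readB r x ⟨k.1, lt_of_lt_of_le k.2 hJq⟩) = y).card := rfl
        omega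
      have hd := hdisc y hne
      have hd' : 1/8 ≤ dTV p (fun _ => 1 / (Fintype.card (Fin s' → Bool) : ℝ)) := by
        have he : (fun _ : Fin s' → Bool => 1 / (Fintype.card (Fin s' → Bool) : ℝ))
            = (fun _ : Fin s' → Bool => (1:ℝ) / 2 ^ (q - J.card)) := by
          funext w
          rw [hcards]
        rw [he]
        exact hd
      have hent := entropy2_le_of_dTV p hp0 hp1 hd'
      rw [hcards, hlogs] at hent
      -- chain rule identity
      have hterm : ∀ w, ((A y w : ℝ)/c) * Real.logb 2 ((A y w : ℝ)/c)
          = ((B y : ℝ)/c) * (p w * Real.logb 2 (p w))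
            + ((A y w : ℝ)/c) * Real.logb 2 ((B y : ℝ)/c) := by
        intro w
        rcases Nat.eq_zero_or_pos (A y w) with h | h
        · have hA0 : (A y w : ℝ) = 0 := by exact_mod_cast h
          have hpw : p w = 0 := by simp only [hp, hA0, zero_div]
          rw [hpw, hA0]
          simp only [zero_div, zero_mul, mul_zero, add_zero, zero_add]
        · have hApos : (0:ℝ) < (A y w : ℝ) := by exact_mod_cast h
          have hsplit : Real.logb 2 ((A y w : ℝ)/c)
              = Real.logb 2 ((A y w : ℝ)/(B y : ℝ)) + Real.logb 2 ((B y : ℝ)/c) := by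
            rw [Real.logb_div (ne_of_gt hApos) (ne_of_gt hcR),
                Real.logb_div (ne_of_gt hApos) (ne_of_gt hBpos),
                Real.logb_div (ne_of_gt hBpos) (ne_of_gt hcR)]
            ring
          have hkey : ((B y : ℝ)/c) * ((A y w : ℝ)/(B y : ℝ)) = (A y w : ℝ)/c := by
            rw [div_mul_div_comm, mul_comm ((B y:ℝ)) _,
              mul_div_mul_right _ _ (ne_of_gt hBpos)]
          simp only [hp]
          rw [hsplit]
          conv_rhs => rw [← mul_assoc, hkey]
          rw [mul_add]
      have hiden : -∑ w, ((A y w : ℝ)/c) * Real.logb 2 ((A y w : ℝ)/c)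
          = ((B y : ℝ)/c) * entropy2 p - ((B y : ℝ)/c) * Real.logb 2 ((B y : ℝ)/c) := by
        rw [Finset.sum_congr rfl (fun w _ => hterm w), Finset.sum_add_distrib,
          ← Finset.mul_sum, ← Finset.sum_mul, ← Finset.sum_div, hAB y, entropy2]
        ring
      rw [hiden]
      have hB0 : (0:ℝ) ≤ (B y : ℝ)/c := div_nonneg (Nat.cast_nonneg _) (Nat.cast_nonneg _)
      have := mul_le_mul_of_nonneg_left hent hB0
      linarith
  -- reindex the entropy sum
  have hsum1 : ∑ v : Fin q → Bool,
        ((C'.filter fun x => readB r x = v).card : ℝ)/c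
          * Real.logb 2 (((C'.filter fun x => readB r x = v).card : ℝ)/c)
      = ∑ yw : (Fin m → Bool) × (Fin s' → Bool),
        ((A yw.1 yw.2 : ℝ)/c) * Real.logb 2 ((A yw.1 yw.2 : ℝ)/c) := by
    apply Fintype.sum_equiv E
    intro v
    rw [hfilt v]
  have hsum : entropy2 (fun v : Fin q → Bool =>
        ((C'.filter fun x => readB r x = v).card : ℝ) / (c : ℝ))
      = -∑ y, ∑ w, ((A y w : ℝ)/c) * Real.logb 2 ((A y w : ℝ)/c) := by
    simp only [entropy2]
    rw [hsum1]
    rw [Fintype.sum_prod_type (f := fun yw : (Fin m → Bool) × (Fin s' → Bool) =>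
      ((A yw.1 yw.2 : ℝ)/c) * Real.logb 2 ((A yw.1 yw.2 : ℝ)/c))]
  rw [hsum]
  have hstep : -∑ y, ∑ w, ((A y w : ℝ)/c) * Real.logb 2 ((A y w : ℝ)/c)
      ≤ ∑ y, (((B y : ℝ)/c) * ((s' : ℝ) - 1/32) - ((B y : ℝ)/c) * Real.logb 2 ((B y : ℝ)/c)) := by
    rw [← Finset.sum_neg_distrib]
    exact Finset.sum_le_sum (fun y _ => hpery y)
  have hnorm : ∑ y, ((B y : ℝ)/c) = 1 := by
    rw [← Finset.sum_div, hBc, div_self (ne_of_gt hcR)]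
  have hmax : -∑ y, ((B y : ℝ)/c) * Real.logb 2 ((B y : ℝ)/c) ≤ (m : ℝ) := by
    have := maxEntropy (fun y => (B y : ℝ)/c)
      (fun y => div_nonneg (Nat.cast_nonneg _) (Nat.cast_nonneg _)) hnorm
    rw [entropy2] at this
    rw [hcardm, hlogm] at this
    exact this
  have hsplit2 : ∑ y, (((B y : ℝ)/c) * ((s' : ℝ) - 1/32)
        - ((B y : ℝ)/c) * Real.logb 2 ((B y : ℝ)/c))
      = ((s' : ℝ) - 1/32) + (-∑ y, ((B y : ℝ)/c) * Real.logb 2 ((B y : ℝ)/c)) := by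
    rw [Finset.sum_sub_distrib, ← Finset.sum_mul, hnorm]
    ring
  have hqm : (m : ℝ) + (s' : ℝ) = (q : ℝ) := by exact_mod_cast hms
  linarith
end
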